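/- arXiv:1904.03723 — 2 statements merged into one kernel-verified Lean document; each statement's English description precedes it below -/
import Mathlib

section
/- Let G be a triangle-free planar graph with at least 3 vertices, and let P be a path in G with at most 3 vertices such that V(P) ≠ V(G) and G is connected. Then there exists a vertex v ∈ V(G)\V(P) of degree at most 3 in G. -/
private lemma walk_closed_aux {V : Type*} {G : SimpleGraph V} (S : Set V)
    (hS : ∀ u ∈ S, ∀ y, G.Adj u y → y ∈ S) :
    ∀ {u w : V}, G.Walk u w → u ∈ S → w ∈ S := by
  intro u w q
  induction q with
  | nil => exact id
  | cons h q ih => intro hu; exact ih (hS _ hu _ h)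

/-- Let `G` be a triangle-free planar graph (so
`e(G) ≤ 2·v(G) − 4` by Euler's formula) with at least 3 vertices, let `P` be a
path in `G` with at most 3 vertices such that `V(P) ≠ V(G)` and `G` is connected.
Then there is a vertex `v ∉ V(P)` of degree at most 3 in `G`. -/
theorem low_degree_vertex_outside_path {V : Type*} [Fintype V] [DecidableEq V]
    (G : SimpleGraph V) [DecidableRel G.Adj]
    (htf : G.CliqueFree 3)
    (hEuler : (G.edgeFinset.card : ℤ) ≤ 2 * (Fintype.card V) - 4)
    (hn : 3 ≤ Fintype.card V)
    (hconn : G.Connected)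
    {a b : V} (p : G.Walk a b) (hp : p.IsPath)
    (hlen : p.support.length ≤ 3)
    (hproper : ∃ w : V, w ∉ p.support) :
    ∃ v : V, v ∉ p.support ∧ G.degree v ≤ 3 := by
  by_contra hcon
  push_neg at hcon
  obtain ⟨w, hw⟩ := hproper
  -- every vertex has degree at least 1
  have hdeg1 : ∀ v : V, 1 ≤ G.degree v := by
    intro v
    obtain ⟨u, hu⟩ := Fintype.exists_ne_of_one_lt_card (by omega) v
    obtain ⟨q⟩ := hconn.preconnected v u
    cases q with
    | nil => exact absurd rfl hu
    | cons h _ =>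
      have := (G.degree_pos_iff_exists_adj v).mpr ⟨_, h⟩
      omega
  have hE : 2 * G.edgeFinset.card ≤ 4 * Fintype.card V - 8 := by omega
  have hsum : ∑ v, G.degree v = 2 * G.edgeFinset.card :=
    G.sum_degrees_eq_twice_card_edges
  have hsplit : ∑ v ∈ p.support.toFinset, G.degree v
      + ∑ v ∈ (p.support.toFinset)ᶜ, G.degree v = ∑ v, G.degree v :=
    Finset.sum_add_sum_compl _ _
  have hcardS : (p.support.toFinset).card = p.support.length :=
    List.toFinset_card_of_nodup hp.support_nodup
  have hcardSc : (p.support.toFinset)ᶜ.card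
      = Fintype.card V - p.support.length := by
    rw [Finset.card_compl, hcardS]
  have hcardle : p.support.length ≤ Fintype.card V := by
    rw [← hcardS]; exact Finset.card_le_univ _
  have hout : ∀ v ∈ (p.support.toFinset)ᶜ, 4 ≤ G.degree v := by
    intro v hv
    have hv' : v ∉ p.support := by
      simpa using Finset.mem_compl.mp hv
    have := hcon v hv'
    omega
  have hsum_out : (p.support.toFinset)ᶜ.card * 4
      ≤ ∑ v ∈ (p.support.toFinset)ᶜ, G.degree v := by
    simpa using Finset.card_nsmul_le_sum _ _ 4 hout
  have hsum_in : (p.support.toFinset).card * 1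
      ≤ ∑ v ∈ p.support.toFinset, G.degree v := by
    simpa using Finset.card_nsmul_le_sum _ _ 1 (fun v _ => hdeg1 v)
  -- hence the path has exactly 3 vertices
  have hk3 : p.support.length = 3 := by
    have h1 := p.length_support
    omega
  -- the sum of degrees on the path is at most 4
  have hsumS_le : ∑ v ∈ p.support.toFinset, G.degree v ≤ 4 := by omega
  clear hsum_in hsum_out hout hE hsum hsplit hcardSc hcardle hEuler htf hlen
  -- extract the shape of the walk
  cases p with
  | nil => simp at hk3
  | cons h1 q =>
    cases q with
    | nil => simp at hk3
    | cons h2 r =>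
      cases r with
      | cons h3 s => simp [SimpleGraph.Walk.support_cons] at hk3
      | nil =>
        rename_i x
        -- support = [a, x, b]
        have hsupp : (SimpleGraph.Walk.cons h1 (SimpleGraph.Walk.cons h2
            SimpleGraph.Walk.nil)).support = [a, x, b] := by simp
        have hnd := hp.support_nodup
        rw [hsupp] at hnd hw hsumS_le hcon
        have hax : a ≠ x := by simp at hnd; tauto
        have hab : a ≠ b := by simp at hnd; tauto
        have hxb : x ≠ b := by simp at hnd; tauto
        have hsum3 : ∑ v ∈ ([a, x, b] : List V).toFinset, G.degree v
            = G.degree a + G.degree x + G.degree b := by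
          have : ([a, x, b] : List V).toFinset = {a, x, b} := by
            ext y; simp
          rw [this, Finset.sum_insert (by simp [hax, hab]),
            Finset.sum_insert (by simp [hxb]), Finset.sum_singleton]
          ring
        rw [hsum3] at hsumS_le
        -- degree of x is at least 2
        have hsubx : ({a, b} : Finset V) ⊆ G.neighborFinset x := by
          intro y hy
          simp only [Finset.mem_insert, Finset.mem_singleton] at hy
          rcases hy with rfl | rfl
          · simpa using h1.symm
          · simpa using h2
        have hdegx : 2 ≤ G.degree x := by
          have := Finset.card_le_card hsubx
          rwa [Finset.card_insert_of_notMem (by simp [hab]),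
            Finset.card_singleton, SimpleGraph.card_neighborFinset_eq_degree]
            at this
        have hda : G.degree a = 1 := by
          have h1' := hdeg1 a; have h2' := hdeg1 b
          have t1 : G.degree a + G.degree x + G.degree b ≤ 4 := hsumS_le
          have t2 : 2 ≤ G.degree x := hdegx
          omega
        have hdx : G.degree x = 2 := by
          have t1 : G.degree a + G.degree x + G.degree b ≤ 4 := hsumS_le
          have t2 : 2 ≤ G.degree x := hdegx
          have := hdeg1 a; have := hdeg1 b; omega
        have hdb : G.degree b = 1 := by
          have t1 : G.degree a + G.degree x + G.degree b ≤ 4 := hsumS_le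
          have t2 : 2 ≤ G.degree x := hdegx
          have := hdeg1 a; have := hdeg1 b; omega
        -- neighborhoods are confined to {a, x, b}
        have hNa : G.neighborFinset a = {x} := by
          refine (Finset.eq_of_subset_of_card_le ?_ ?_).symm
          · intro y hy; simp at hy; subst hy; simpa using h1
          · rw [SimpleGraph.card_neighborFinset_eq_degree, hda,
              Finset.card_singleton]
        have hNb : G.neighborFinset b = {x} := by
          refine (Finset.eq_of_subset_of_card_le ?_ ?_).symm
          · intro y hy; simp at hy; subst hy; simpa using h2.symm
          · rw [SimpleGraph.card_neighborFinset_eq_degree, hdb,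
              Finset.card_singleton]
        have hNx : G.neighborFinset x = {a, b} := by
          refine (Finset.eq_of_subset_of_card_le hsubx ?_).symm
          rw [SimpleGraph.card_neighborFinset_eq_degree, hdx,
            Finset.card_insert_of_notMem (by simp [hab]),
            Finset.card_singleton]
        -- {a, x, b} is closed under adjacency
        have hclosed : ∀ u ∈ ({a, x, b} : Set V), ∀ y, G.Adj u y
            → y ∈ ({a, x, b} : Set V) := by
          intro u hu y hy
          rcases hu with rfl | rfl | rfl
          · have : y ∈ G.neighborFinset u := by simpa using hy
            rw [hNa] at this; simp at this; simp [this]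
          · have : y ∈ G.neighborFinset u := by simpa using hy
            rw [hNx] at this; simp at this
            rcases this with rfl | rfl <;> simp
          · have : y ∈ G.neighborFinset u := by simpa using hy
            rw [hNb] at this; simp at this; simp [this]
        obtain ⟨q⟩ := hconn.preconnected a w
        have hwS : w ∈ ({a, x, b} : Set V) :=
          walk_closed_aux _ hclosed q (by simp)
        simp at hw hwS
        tauto
end

section
/- Let G be a graph, let {H_v} be a family of pairwise non-touching induced subgraphs of G (vertex-disjoint with no edges between distinct members), each r-deletable in G, with pairwise disjoint vertex sets. If ψ is a proper L-coloring of G − ∪_v V(H_v) for an r-list-assignment L of G, then ψ extends to a proper L-coloring of G. -/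
/-- An induced subgraph on `S` is `r`-deletable in `G` if for every
list-assignment `L'` with `|L'(v)| ≥ r − (d_G(v) − d_{G[S]}(v))` for `v ∈ S`,
the induced subgraph `G[S]` has a proper `L'`-coloring. -/
def SimpleGraph.Deletable {V : Type*} (G : SimpleGraph V) (S : Set V) (r : ℕ) : Prop :=
  ∀ L : V → Finset ℕ,
    (∀ v ∈ S, r - ((G.neighborSet v).ncard - (G.neighborSet v ∩ S).ncard) ≤ (L v).card) →
    ∃ c : V → ℕ, (∀ v ∈ S, c v ∈ L v) ∧
      ∀ ⦃u w⦄, u ∈ S → w ∈ S → G.Adj u w → c u ≠ c w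

/-- Let `{H_i}` be a family of pairwise non-touching induced
subgraphs of `G` (vertex-disjoint, no edges between distinct members), each
`r`-deletable in `G`. If `ψ` is a proper `L`-coloring of `G − ⋃ᵢ V(Hᵢ)` for an
`r`-list-assignment `L` of `G`, then `ψ` extends to a proper `L`-coloring of `G`. -/
theorem extend_coloring_over_deletable_family {V : Type*} [Fintype V]
    (G : SimpleGraph V) (r : ℕ) {ι : Type*} (S : ι → Set V)
    (hdisj : ∀ i j, i ≠ j → Disjoint (S i) (S j))
    (hnotouch : ∀ i j, i ≠ j → ∀ a ∈ S i, ∀ b ∈ S j, ¬ G.Adj a b)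
    (hdel : ∀ i, G.Deletable (S i) r)
    (L : V → Finset ℕ) (hL : ∀ v, r ≤ (L v).card)
    (ψ : V → ℕ)
    (hψmem : ∀ v, v ∉ (⋃ i, S i) → ψ v ∈ L v)
    (hψproper : ∀ ⦃u w⦄, u ∉ (⋃ i, S i) → w ∉ (⋃ i, S i) → G.Adj u w → ψ u ≠ ψ w) :
    ∃ c : V → ℕ, (∀ v, v ∉ (⋃ i, S i) → c v = ψ v) ∧ (∀ v, c v ∈ L v) ∧
      ∀ ⦃u w⦄, G.Adj u w → c u ≠ c w := by
  classical
  have key : ∀ i, ∃ c : V → ℕ,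
      (∀ v ∈ S i,
        c v ∈ L v \ ((G.neighborSet v \ S i).toFinite.toFinset.image ψ)) ∧
      ∀ ⦃u w⦄, u ∈ S i → w ∈ S i → G.Adj u w → c u ≠ c w := by
    intro i
    apply hdel i
    intro v hv
    set T : Finset ℕ := (G.neighborSet v \ S i).toFinite.toFinset.image ψ with hT
    have hNfin : (G.neighborSet v).Finite := Set.toFinite _
    have h1 : (G.neighborSet v ∩ S i).ncard + (G.neighborSet v \ S i).ncard
        = (G.neighborSet v).ncard :=
      Set.ncard_inter_add_ncard_diff_eq_ncard _ _ hNfin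
    have h2 : T.card ≤ (G.neighborSet v \ S i).ncard := by
      calc T.card ≤ (G.neighborSet v \ S i).toFinite.toFinset.card :=
            Finset.card_image_le
        _ = (G.neighborSet v \ S i).ncard := (Set.ncard_eq_toFinset_card _ _).symm
    have h3 : (L v).card - T.card ≤ (L v \ T).card := Finset.le_card_sdiff _ _
    have h4 : r ≤ (L v).card := hL v
    omega
  choose col hcolmem hcolproper using key
  set c : V → ℕ := fun v =>
    if h : v ∈ ⋃ i, S i then col (Set.mem_iUnion.mp h).choose v else ψ v with hc
  have hcin : ∀ v (h : v ∈ ⋃ i, S i), v ∈ S (Set.mem_iUnion.mp h).choose :=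
    fun v h => (Set.mem_iUnion.mp h).choose_spec
  have hceq : ∀ v (h : v ∈ ⋃ i, S i), c v = col (Set.mem_iUnion.mp h).choose v := by
    intro v h; simp only [hc, dif_pos h]
  have huniq : ∀ v (h : v ∈ ⋃ i, S i) j, v ∈ S j → (Set.mem_iUnion.mp h).choose = j := by
    intro v h j hvj
    by_contra hne
    exact (hdisj _ j hne).ne_of_mem (hcin v h) hvj rfl
  -- the mixed case
  have hmix : ∀ ⦃u w⦄ (hu : u ∈ ⋃ i, S i), w ∉ (⋃ i, S i) → G.Adj u w → c u ≠ c w := by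
    intro u w hu hw hadj
    set i := (Set.mem_iUnion.mp hu).choose with hi
    have hcu := hcolmem i u (hcin u hu)
    rw [Finset.mem_sdiff] at hcu
    have hwni : w ∈ G.neighborSet u \ S i := by
      refine ⟨hadj, fun hws => hw (Set.mem_iUnion.mpr ⟨i, hws⟩)⟩
    have : ψ w ∈ (G.neighborSet u \ S i).toFinite.toFinset.image ψ := by
      exact Finset.mem_image_of_mem ψ ((Set.Finite.mem_toFinset _).mpr hwni)
    have hcw : c w = ψ w := by simp only [hc, dif_neg hw]
    rw [hceq u hu, hcw]
    intro heq
    exact hcu.2 (heq ▸ this)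
  refine ⟨c, ?_, ?_, ?_⟩
  · intro v hv; simp only [hc, dif_neg hv]
  · intro v
    by_cases hv : v ∈ ⋃ i, S i
    · rw [hceq v hv]
      exact (Finset.mem_sdiff.mp (hcolmem _ v (hcin v hv))).1
    · rw [show c v = ψ v by simp only [hc, dif_neg hv]]
      exact hψmem v hv
  · intro u w hadj
    by_cases hu : u ∈ ⋃ i, S i <;> by_cases hw : w ∈ ⋃ i, S i
    · -- both inside
      set i := (Set.mem_iUnion.mp hu).choose with hi
      set j := (Set.mem_iUnion.mp hw).choose with hj
      by_cases hij : i = j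
      · rw [hceq u hu, hceq w hw]
        show col i u ≠ col j w
        rw [hij]
        exact hcolproper j (hij ▸ hcin u hu) (hcin w hw) hadj
      · exact absurd hadj (hnotouch i j hij u (hcin u hu) w (hcin w hw))
    · exact hmix hu hw hadj
    · exact fun h => hmix hw hu hadj.symm h.symm
    · have : c u = ψ u := by simp only [hc, dif_neg hu]
      have h2 : c w = ψ w := by simp only [hc, dif_neg hw]
      rw [this, h2]; exact hψproper hu hw hadj
end
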